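/- For every α ∈ (0,2), the function y ↦ (1 − e^{−y²})·|y|^{−1−α} is integrable on ℝ and C₁,α · ∫_ℝ (1 − e^{−y²}) |y|^{−1−α} dy = 2^α · Γ((1+α)/2) / √π. That is, the fractional Laplacian of the Gaussian u(x) = e^{−x²}, evaluated at x = 0 via its singular integral representation (−Δ)^{α/2}u(0) = C₁,α ∫_ℝ (u(0) − u(y))|y|^{−1−α} dy, equals 2^α Γ((1+α)/2)/√π. -/

import Mathlib

open MeasureTheory

open Real Set Filter in
private lemma frac_lap_intOn (α : ℝ) (hα0 : 0 < α) (hα2 : α < 2) :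
    IntegrableOn (fun y : ℝ => (1 - Real.exp (-y ^ 2)) * y ^ (-1 - α)) (Ioi 0) := by
  have hmeas : Measurable (fun y : ℝ => (1 - Real.exp (-y ^ 2)) * y ^ (-1 - α)) :=
    (measurable_const.sub ((measurable_id.pow_const 2).neg.exp)).mul
      (measurable_id.pow measurable_const)
  rw [← Ioc_union_Ioi_eq_Ioi (zero_le_one' ℝ), integrableOn_union]
  constructor
  · have hint : IntegrableOn (fun y : ℝ => y ^ (1 - α)) (Ioc (0:ℝ) 1) := by
      rw [← intervalIntegrable_iff_integrableOn_Ioc_of_le zero_le_one]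
      exact intervalIntegral.intervalIntegrable_rpow' (by linarith)
    refine Integrable.mono hint (hmeas.aestronglyMeasurable.restrict) ?_
    filter_upwards [ae_restrict_mem measurableSet_Ioc] with y hy
    have hy0 : 0 < y := hy.1
    have h1 : 0 ≤ 1 - Real.exp (-y ^ 2) := by
      simp only [sub_nonneg, Real.exp_le_one_iff, Left.neg_nonpos_iff]
      positivity
    have h2 : 1 - Real.exp (-y ^ 2) ≤ y ^ 2 := by
      have := Real.add_one_le_exp (-y ^ 2)
      linarith
    rw [Real.norm_eq_abs, Real.norm_eq_abs,
      abs_of_nonneg (mul_nonneg h1 (Real.rpow_nonneg hy0.le _)),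
      abs_of_nonneg (Real.rpow_nonneg hy0.le _)]
    calc (1 - Real.exp (-y ^ 2)) * y ^ (-1 - α) ≤ y ^ 2 * y ^ (-1 - α) :=
          mul_le_mul_of_nonneg_right h2 (Real.rpow_nonneg hy0.le _)
      _ = y ^ (1 - α) := by
          rw [← Real.rpow_natCast y 2, ← Real.rpow_add hy0]; norm_num; ring_nf
  · refine Integrable.mono (integrableOn_Ioi_rpow_of_lt (by linarith : -1 - α < -1) one_pos)
      (hmeas.aestronglyMeasurable.restrict) ?_
    filter_upwards [ae_restrict_mem measurableSet_Ioi] with y hy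
    have hy0 : (0:ℝ) < y := lt_trans one_pos hy
    have h1 : 0 ≤ 1 - Real.exp (-y ^ 2) := by
      simp only [sub_nonneg, Real.exp_le_one_iff, Left.neg_nonpos_iff]; positivity
    have h2 : 1 - Real.exp (-y ^ 2) ≤ 1 := by
      have := Real.exp_pos (-y ^ 2); linarith
    rw [Real.norm_eq_abs, Real.norm_eq_abs,
      abs_of_nonneg (mul_nonneg h1 (Real.rpow_nonneg hy0.le _)),
      abs_of_nonneg (Real.rpow_nonneg hy0.le _)]
    nlinarith [Real.rpow_nonneg hy0.le (-1 - α),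
      mul_le_mul_of_nonneg_right h2 (Real.rpow_nonneg hy0.le (-1 - α))]

open Real Set Filter in
private lemma frac_lap_intval (α : ℝ) (hα0 : 0 < α) (hα2 : α < 2) :
    ∫ y in Ioi (0:ℝ), (1 - Real.exp (-y ^ 2)) * y ^ (-1 - α)
      = Real.Gamma ((2 - α) / 2) / α := by
  have hfInt := frac_lap_intOn α hα0 hα2
  set F : ℝ → ℝ := fun y => -((1 - Real.exp (-y ^ 2)) * y ^ (-α) / α) with hF
  set g : ℝ → ℝ := fun y => (2 / α) * (y ^ (1 - α) * Real.exp (-y ^ 2)) with hg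
  have hgInt : IntegrableOn g (Ioi 0) := by
    refine Integrable.const_mul ?_ _
    have := integrableOn_rpow_mul_exp_neg_rpow (p := 2) (s := 1 - α) (by linarith) two_pos
    refine this.congr_fun (fun x hx => ?_) measurableSet_Ioi
    dsimp only
    rw [show ((2:ℝ)) = ((2:ℕ):ℝ) by norm_num, Real.rpow_natCast]
  have hderiv : ∀ x ∈ Ioi (0:ℝ), HasDerivAt F
      ((1 - Real.exp (-x ^ 2)) * x ^ (-1 - α) - g x) x := by
    intro x hx
    have hx0 : (0:ℝ) < x := hx
    have hu : HasDerivAt (fun y : ℝ => 1 - Real.exp (-y ^ 2))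
        (2 * x * Real.exp (-x ^ 2)) x := by
      have h1 : HasDerivAt (fun y : ℝ => -y ^ 2) (-(2 * x)) x := by
        simpa using ((hasDerivAt_pow 2 x).fun_neg)
      have h2 := (h1.exp).const_sub 1
      refine h2.congr_deriv ?_
      ring
    have hv : HasDerivAt (fun y : ℝ => y ^ (-α)) (-α * x ^ (-α - 1)) x := by
      simpa using Real.hasDerivAt_rpow_const (x := x) (p := -α) (Or.inl hx0.ne')
    have hd := ((hu.mul hv).div_const α).fun_neg
    refine hd.congr_deriv ?_
    have e1 : x ^ (1 - α) = x * x ^ (-α) := by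
      rw [show (1:ℝ) - α = 1 + (-α) by ring, Real.rpow_add hx0, Real.rpow_one]
    have e2 : x ^ (-1 - α) = x ^ (-α - 1) := by ring_nf
    have hgx : g x = 2 / α * (x ^ (1 - α) * Real.exp (-x ^ 2)) := rfl
    rw [hgx, e1, e2]
    field_simp
    ring
  have key : ∀ y : ℝ, 0 ≤ y → -(y ^ (2 - α) / α) ≤ F y ∧ F y ≤ 0 := by
    intro y hy
    rcases hy.eq_or_lt with rfl | hy0
    · simp [hF, Real.zero_rpow (by linarith : (2:ℝ) - α ≠ 0)]
    have h1 : 0 ≤ 1 - Real.exp (-y ^ 2) := by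
      simp only [sub_nonneg, Real.exp_le_one_iff, Left.neg_nonpos_iff]; positivity
    have h2 : 1 - Real.exp (-y ^ 2) ≤ y ^ 2 := by
      have := Real.add_one_le_exp (-y ^ 2); linarith
    have hv0 : 0 ≤ y ^ (-α) := Real.rpow_nonneg hy0.le _
    constructor
    · have : (1 - Real.exp (-y ^ 2)) * y ^ (-α) ≤ y ^ (2 - α) := by
        calc (1 - Real.exp (-y ^ 2)) * y ^ (-α) ≤ y ^ 2 * y ^ (-α) :=
              mul_le_mul_of_nonneg_right h2 hv0
          _ = y ^ (2 - α) := by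
              rw [show ((2:ℝ)) - α = ((2:ℕ):ℝ) + (-α) by push_cast; ring,
                Real.rpow_add hy0, Real.rpow_natCast]
      simp only [hF]
      exact neg_le_neg (by gcongr)
    · simp only [hF]
      have : 0 ≤ (1 - Real.exp (-y ^ 2)) * y ^ (-α) / α := by positivity
      linarith
  have hcont : ContinuousWithinAt F (Ici 0) 0 := by
    have hF0 : F 0 = 0 := by simp [hF]
    rw [ContinuousWithinAt, hF0]
    have hb : Tendsto (fun y : ℝ => -(y ^ (2 - α) / α)) (nhdsWithin 0 (Ici 0)) (nhds 0) := by
      have hc : ContinuousAt (fun y : ℝ => y ^ (2 - α)) 0 :=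
        Real.continuousAt_rpow_const 0 (2 - α) (Or.inr (by linarith))
      have := ((hc.tendsto).div_const α).neg
      rw [Real.zero_rpow (by linarith : (2:ℝ) - α ≠ 0), zero_div, neg_zero] at this
      exact this.mono_left nhdsWithin_le_nhds
    refine tendsto_of_tendsto_of_tendsto_of_le_of_le' hb tendsto_const_nhds ?_ ?_
    · filter_upwards [self_mem_nhdsWithin] with y hy using (key y hy).1
    · filter_upwards [self_mem_nhdsWithin] with y hy using (key y hy).2
  have htop : Tendsto F atTop (nhds 0) := by
    have h1 : Tendsto (fun y : ℝ => 1 - Real.exp (-y ^ 2)) atTop (nhds 1) := by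
      have hsq : Tendsto (fun y : ℝ => y ^ 2) atTop atTop :=
        tendsto_pow_atTop (by norm_num)
      have hnb : Tendsto (fun y : ℝ => -y ^ 2) atTop atBot :=
        tendsto_neg_atTop_atBot.comp hsq
      have hexp : Tendsto (fun y : ℝ => Real.exp (-y ^ 2)) atTop (nhds 0) :=
        Real.tendsto_exp_atBot.comp hnb
      simpa using tendsto_const_nhds.sub hexp
    have h2 : Tendsto (fun y : ℝ => (y:ℝ) ^ (-α)) atTop (nhds 0) := tendsto_rpow_neg_atTop hα0
    have := ((h1.mul h2).div_const α).neg
    simpa using this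
  have hFint : IntegrableOn (fun x => (1 - Real.exp (-x ^ 2)) * x ^ (-1 - α) - g x) (Ioi 0) :=
    hfInt.sub hgInt
  have hIBP := integral_Ioi_of_hasDerivAt_of_tendsto hcont hderiv hFint htop
  have hF0 : F 0 = 0 := by simp [hF]
  rw [hF0, sub_zero] at hIBP
  rw [integral_sub hfInt hgInt] at hIBP
  have hgval : ∫ y in Ioi (0:ℝ), g y = Real.Gamma ((2 - α) / 2) / α := by
    rw [hg]
    rw [integral_const_mul]
    have := integral_rpow_mul_exp_neg_rpow (p := 2) (q := 1 - α) two_pos (by linarith)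
    have heq : ∫ y in Ioi (0:ℝ), y ^ (1 - α) * Real.exp (-y ^ 2)
        = ∫ y in Ioi (0:ℝ), y ^ (1 - α) * Real.exp (-y ^ (2:ℝ)) := by
      refine setIntegral_congr_fun measurableSet_Ioi (fun x hx => ?_)
      rw [show ((2:ℝ)) = ((2:ℕ):ℝ) by norm_num, Real.rpow_natCast]
    rw [heq, this]
    have : (1 - α + 1) / 2 = (2 - α) / 2 := by ring
    rw [this]
    field_simp
  linarith [hIBP, hgval]

/-- The normalizing constant `C_{1,α}` of the one-dimensional fractional Laplacian. -/
noncomputable def Cna (α : ℝ) : ℝ :=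
  α * 2 ^ (α - 1) * Real.Gamma ((α + 1) / 2) / (Real.sqrt Real.pi * Real.Gamma ((2 - α) / 2))

/-- The fractional Laplacian of the Gaussian `u(x) = e^{−x²}` at `x = 0`, via the singular
integral representation: `y ↦ (1 − e^{−y²})·|y|^{−1−α}` is integrable on `ℝ` and
`C₁,α ∫_ℝ (1 − e^{−y²}) |y|^{−1−α} dy = 2^α Γ((1+α)/2)/√π`. -/
theorem fractional_laplacian_gaussian_at_zero (α : ℝ) (hα0 : 0 < α) (hα2 : α < 2) :
    Integrable (fun y : ℝ => (1 - Real.exp (-y ^ 2)) * |y| ^ (-1 - α)) ∧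
    Cna α * (∫ y : ℝ, (1 - Real.exp (-y ^ 2)) * |y| ^ (-1 - α))
      = 2 ^ α * Real.Gamma ((1 + α) / 2) / Real.sqrt Real.pi := by
  classical
  have hIoi := frac_lap_intOn α hα0 hα2
  have habs : (fun y : ℝ => (1 - Real.exp (-y ^ 2)) * |y| ^ (-1 - α))
      = fun y : ℝ => (1 - Real.exp (-|y| ^ 2)) * |y| ^ (-1 - α) := by
    funext y; rw [sq_abs]
  have hIoi' : IntegrableOn (fun y : ℝ => (1 - Real.exp (-y ^ 2)) * |y| ^ (-1 - α))
      (Set.Ioi 0) := by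
    refine hIoi.congr_fun (fun x hx => ?_) measurableSet_Ioi
    rw [abs_of_pos (Set.mem_Ioi.mp hx)]
  have hint : Integrable (fun y : ℝ => (1 - Real.exp (-y ^ 2)) * |y| ^ (-1 - α)) := by
    have hIic : IntegrableOn (fun y : ℝ => (1 - Real.exp (-y ^ 2)) * |y| ^ (-1 - α))
        (Set.Iic 0) := by
      rw [← Measure.map_neg_eq_self (volume : Measure ℝ)]
      have m : MeasurableEmbedding fun x : ℝ => -x :=
        (Homeomorph.neg ℝ).measurableEmbedding
      rw [m.integrableOn_map_iff]
      simp_rw [Function.comp_def, abs_neg, neg_sq, Set.neg_preimage, Set.neg_Iic, neg_zero]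
      exact Iff.mpr integrableOn_Ici_iff_integrableOn_Ioi hIoi'
    have := hIic.union hIoi'
    rwa [Set.Iic_union_Ioi, integrableOn_univ] at this
  refine ⟨hint, ?_⟩
  have hval : (∫ y : ℝ, (1 - Real.exp (-y ^ 2)) * |y| ^ (-1 - α))
      = 2 * (Real.Gamma ((2 - α) / 2) / α) := by
    rw [habs]
    rw [integral_comp_abs (f := fun t : ℝ => (1 - Real.exp (-t ^ 2)) * t ^ (-1 - α))]
    rw [frac_lap_intval α hα0 hα2]
  rw [hval, Cna]
  have hG : 0 < Real.Gamma ((2 - α) / 2) := Real.Gamma_pos_of_pos (by linarith)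
  have hpi : 0 < Real.sqrt Real.pi := Real.sqrt_pos.mpr Real.pi_pos
  have h2 : (2:ℝ) ^ (α - 1) * 2 = 2 ^ α := by
    rw [Real.rpow_sub two_pos, Real.rpow_one]
    field_simp
  have hcomm : (α + 1) / 2 = (1 + α) / 2 := by ring
  rw [hcomm]
  field_simp
  linear_combination h2
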